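/- Let α₀ ∈ ℝ, let B = poly_B(A) for a real polynomial poly_B with constant term β₀, and let x, u : [0,T] → H with x differentiable such that ẋ_t = α₀ x_t + A x_t + B u_t for all t ∈ [0,T]. Then the auxiliary state x̆_t = x_t − Σ_{ℓ=1}^d ⟨x_t, f_ℓ⟩ f_ℓ satisfies the auxiliary system dynamics: t ↦ x̆_t is differentiable with d/dt x̆_t = α₀ x̆_t + β₀ ŭ_t, where ŭ_t = u_t − Σ_{ℓ=1}^d ⟨u_t, f_ℓ⟩ f_ℓ. -/

import Mathlib

open RealInnerProductSpace

/-- Decoupled auxiliary system dynamics: if `ẋ_t = α₀ x_t + A x_t + poly_B(A) u_t` with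
`β₀` the constant term of `poly_B`, then the auxiliary state
`x̆_t = x_t − Σ_ℓ ⟨x_t, f_ℓ⟩ f_ℓ` satisfies `d/dt x̆_t = α₀ x̆_t + β₀ ŭ_t`. -/
theorem auxiliary_system_dynamics_decoupling
    {H : Type*} [NormedAddCommGroup H] [InnerProductSpace ℝ H] [CompleteSpace H]
    {d : ℕ} (f : Fin d → H) (hf : Orthonormal ℝ f) (lam : Fin d → ℝ)
    (A : H →L[ℝ] H)
    (hA : ∀ v : H, A v = ∑ ℓ : Fin d, (lam ℓ * ⟪v, f ℓ⟫) • f ℓ)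
    (T : ℝ) (hT : 0 < T) (α₀ β₀ : ℝ) (polyB : Polynomial ℝ)
    (hβ₀ : β₀ = polyB.coeff 0)
    (B : H →L[ℝ] H) (hB : B = Polynomial.aeval A polyB)
    (x u : ℝ → H)
    (hx : ∀ t ∈ Set.Icc (0:ℝ) T, HasDerivAt x (α₀ • x t + A (x t) + B (u t)) t) :
    ∀ t ∈ Set.Icc (0:ℝ) T,
      HasDerivAt (fun s => x s - ∑ ℓ : Fin d, ⟪x s, f ℓ⟫ • f ℓ)
        (α₀ • (x t - ∑ ℓ : Fin d, ⟪x t, f ℓ⟫ • f ℓ)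
          + β₀ • (u t - ∑ ℓ : Fin d, ⟪u t, f ℓ⟫ • f ℓ)) t := by
  intro t ht
  set P : H →L[ℝ] H := ∑ ℓ : Fin d, (innerSL ℝ (f ℓ)).smulRight (f ℓ) with hPdef
  have hP : ∀ v : H, P v = ∑ ℓ : Fin d, ⟪v, f ℓ⟫ • f ℓ := by
    intro v
    simp [hPdef, ContinuousLinearMap.sum_apply, real_inner_comm]
  set Q : H →L[ℝ] H := ContinuousLinearMap.id ℝ H - P with hQdef
  have hQ : ∀ v : H, Q v = v - ∑ ℓ : Fin d, ⟪v, f ℓ⟫ • f ℓ := by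
    intro v; simp [hQdef, hP]
  have hinner : ∀ (v : H) (m : Fin d), ⟪A v, f m⟫ = lam m * ⟪v, f m⟫ := by
    intro v m
    rw [hA v, sum_inner]
    simp [real_inner_smul_left, orthonormal_iff_ite.mp hf, mul_ite]
  have hPA : ∀ v : H, P (A v) = A v := by
    intro v
    rw [hP]
    simp only [hinner]
    exact (hA v).symm
  have hQA : ∀ v : H, Q (A v) = 0 := by
    intro v; simp [hQdef, hPA]
  have hQpow : ∀ (k : ℕ) (v : H), Q ((A ^ (k + 1)) v) = 0 := by
    intro k v
    rw [pow_succ']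
    exact hQA _
  have hQB : ∀ v : H, Q (B v) = β₀ • Q v := by
    intro v
    rw [hB, Polynomial.aeval_eq_sum_range]
    rw [ContinuousLinearMap.sum_apply, map_sum]
    rw [Finset.sum_eq_single 0]
    · simp [hβ₀]
    · intro i hi hi0
      obtain ⟨k, rfl⟩ := Nat.exists_eq_succ_of_ne_zero hi0
      simp only [ContinuousLinearMap.smul_apply, map_smul, Nat.succ_eq_add_one, hQpow, smul_zero]
    · intro h0
      simp at h0
  have h1 : HasDerivAt (fun s => Q (x s)) (Q (α₀ • x t + A (x t) + B (u t))) t :=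
    Q.hasFDerivAt.comp_hasDerivAt t (hx t ht)
  have h2 : Q (α₀ • x t + A (x t) + B (u t))
      = α₀ • (x t - ∑ ℓ : Fin d, ⟪x t, f ℓ⟫ • f ℓ)
        + β₀ • (u t - ∑ ℓ : Fin d, ⟪u t, f ℓ⟫ • f ℓ) := by
    rw [map_add, map_add, hQA, hQB, map_smul, hQ, hQ]
    simp
  rw [h2] at h1
  have h3 : (fun s => Q (x s)) = fun s => x s - ∑ ℓ : Fin d, ⟪x s, f ℓ⟫ • f ℓ := by
    funext s; exact hQ (x s)
  rwa [h3] at h1
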